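/- If P ⊆ (ℕ → Bool) is a perfect set, then the image s_b(P) is a perfect subset of ℝ. -/

import Mathlib

/-- The map computing a real in `[0,1]` from its binary expansion:
`s_b p = Σ_{i∈ℕ} p i · 2^{-(i+1)}`. -/
noncomputable def sb (p : ℕ → Bool) : ℝ :=
  ∑' i : ℕ, (if p i then (1 : ℝ) else 0) / 2 ^ (i + 1)

open Topology Filter

noncomputable def sbf (p : ℕ → Bool) (i : ℕ) : ℝ := (if p i then (1 : ℝ) else 0) / 2 ^ (i + 1)

lemma sbf_nonneg (p : ℕ → Bool) (i : ℕ) : 0 ≤ sbf p i := by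
  unfold sbf; positivity

lemma sbf_le (p : ℕ → Bool) (i : ℕ) : sbf p i ≤ (1/2) ^ (i+1) := by
  have h : (1/2:ℝ)^(i+1) = 1/2^(i+1) := by rw [div_pow, one_pow]
  rw [h]; unfold sbf
  gcongr
  split <;> norm_num

lemma summable_half : Summable (fun i : ℕ => ((1:ℝ)/2) ^ (i+1)) := by
  simpa only [pow_succ] using (summable_geometric_two).mul_right (1/2 : ℝ)

lemma summable_sbf (p : ℕ → Bool) : Summable (sbf p) :=
  Summable.of_nonneg_of_le (sbf_nonneg p) (sbf_le p) summable_half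

lemma tsum_half (N : ℕ) : ∑' i : ℕ, ((1:ℝ)/2) ^ (i + N + 1) = (1/2) ^ N := by
  have h : ∀ i : ℕ, ((1:ℝ)/2) ^ (i + N + 1) = ((1:ℝ)/2) ^ i * ((1/2) ^ (N+1)) := by
    intro i; rw [← pow_add, Nat.add_assoc]
  rw [tsum_congr h, tsum_mul_right, tsum_geometric_two, pow_succ]
  ring

lemma sb_eq_tsum (p : ℕ → Bool) : sb p = ∑' i, sbf p i := rfl

lemma sb_core {p q : ℕ → Bool} {n : ℕ} (hpn : p n = true) (hqn : q n = false)
    (hmin : ∀ m, m < n → p m = q m) (h : sb p = sb q) :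
    ∀ k, p (k + (n+1)) = false ∧ q (k + (n+1)) = true := by
  set N := n + 1 with hN
  set d : ℕ → ℝ := fun i => sbf q i - sbf p i with hd_def
  have hdsum : Summable d := (summable_sbf q).sub (summable_sbf p)
  have htsum : ∑' i, d i = 0 := by
    rw [Summable.tsum_sub (summable_sbf q) (summable_sbf p), ← sb_eq_tsum, ← sb_eq_tsum, h, sub_self]
  have hhead : ∑ i ∈ Finset.range N, d i = -((1/2:ℝ)) ^ N := by
    rw [Finset.sum_eq_single_of_mem n (Finset.self_mem_range_succ n)]
    · simp only [hd_def, sbf, hpn, hqn, hN]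
      norm_num [div_pow]
    · intro b hb hbn
      have hb' : b < n := lt_of_le_of_ne (Nat.lt_succ_iff.mp (Finset.mem_range.mp hb)) hbn
      simp [hd_def, sbf, hmin b hb']
  have htail : ∑' i, d (i + N) = (1/2:ℝ) ^ N := by
    have := Summable.sum_add_tsum_nat_add N hdsum
    rw [htsum, hhead] at this
    linarith
  set u : ℕ → ℝ := fun i => (1/2:ℝ) ^ (i + N + 1) - d (i + N) with hu_def
  have hu_nonneg : ∀ i, 0 ≤ u i := by
    intro i
    have h1 : d (i + N) ≤ sbf q (i + N) := by
      simp only [hd_def]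
      have := sbf_nonneg p (i + N); linarith
    have h2 := sbf_le q (i + N)
    simp only [hu_def]
    exact sub_nonneg.2 (h1.trans h2)
  have hds : Summable fun i => d (i + N) := (summable_nat_add_iff N).2 hdsum
  have hhs : Summable fun i : ℕ => ((1:ℝ)/2) ^ (i + N + 1) := by
    have := (summable_nat_add_iff (f := fun i : ℕ => ((1:ℝ)/2) ^ (i + 1)) N).2 summable_half
    simpa using this
  have husum : Summable u := hhs.sub hds
  have hutsum : ∑' i, u i = 0 := by
    simp only [hu_def]
    rw [Summable.tsum_sub hhs hds, tsum_half, htail, sub_self]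
  have hu0 : ∀ i, u i = 0 := by
    intro i
    have hle : u i ≤ ∑' j, u j := Summable.le_tsum husum i (fun j _ => hu_nonneg j)
    rw [hutsum] at hle
    exact le_antisymm hle (hu_nonneg i)
  intro k
  have hk := hu0 k
  have hdk : d (k + N) = (1/2:ℝ) ^ (k + N + 1) := by
    simp only [hu_def] at hk; linarith
  have hple := sbf_nonneg p (k + N)
  have hqle := sbf_le q (k + N)
  have hdq : sbf q (k + N) = (1/2:ℝ) ^ (k + N + 1) ∧ sbf p (k + N) = 0 := by
    simp only [hd_def] at hdk
    constructor <;> linarith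
  have hpow : (0:ℝ) < (1/2:ℝ) ^ (k + N + 1) := by positivity
  constructor
  · cases hp : p (k + N)
    · rfl
    · exfalso
      have := hdq.2
      norm_num [sbf, hp] at this
  · cases hq : q (k + N)
    · exfalso
      have := hdq.1
      norm_num [sbf, hq] at this
      linarith
    · rfl

def EvF (p : ℕ → Bool) : Prop := ∃ n, ∀ i, n ≤ i → p i = false
def EvT (p : ℕ → Bool) : Prop := ∃ n, ∀ i, n ≤ i → p i = true

lemma evft {p : ℕ → Bool} (h1 : EvT p) (h2 : EvF p) : False := by
  obtain ⟨n, hn⟩ := h1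
  obtain ⟨m, hm⟩ := h2
  have h1' := hn (max n m) (le_max_left n m)
  have h2' := hm (max n m) (le_max_right n m)
  rw [h1'] at h2'
  simp at h2'

lemma shift_all {p : ℕ → Bool} {n : ℕ} {b : Bool} (h : ∀ k, p (k + (n+1)) = b) :
    ∀ i, n + 1 ≤ i → p i = b := by
  intro i hi
  have : i = (i - (n+1)) + (n+1) := (Nat.sub_add_cancel hi).symm
  rw [this]
  exact h _

lemma sb_pair {p q : ℕ → Bool} (hne : p ≠ q) (h : sb p = sb q) :
    (EvF p ∧ EvT q) ∨ (EvT p ∧ EvF q) := by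
  classical
  have hex : ∃ n, p n ≠ q n := by
    by_contra hc; push_neg at hc; exact hne (funext hc)
  set n := Nat.find hex with hn_def
  have hn : p n ≠ q n := Nat.find_spec hex
  have hmin : ∀ m, m < n → p m = q m := fun m hm => not_not.1 (Nat.find_min hex hm)
  cases hpn : p n
  · have hqn : q n = true := by
      cases hq : q n
      · exact absurd (hpn.trans hq.symm) hn
      · rfl
    have hc := sb_core hqn hpn (fun m hm => (hmin m hm).symm) h.symm
    exact Or.inr ⟨⟨n+1, shift_all (fun k => (hc k).2)⟩, ⟨n+1, shift_all (fun k => (hc k).1)⟩⟩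
  · have hqn : q n = false := by
      cases hq : q n
      · rfl
      · exact absurd (hpn.trans hq.symm) hn
    have hc := sb_core hpn hqn hmin h
    exact Or.inl ⟨⟨n+1, shift_all (fun k => (hc k).1)⟩, ⟨n+1, shift_all (fun k => (hc k).2)⟩⟩

lemma sb_three {p q r : ℕ → Bool} (hpq : p ≠ q) (hpr : p ≠ r) (hqr : q ≠ r)
    (h1 : sb p = sb q) (h2 : sb p = sb r) : False := by
  have h3 : sb q = sb r := h1.symm.trans h2
  rcases sb_pair hpq h1 with ⟨hFp, hTq⟩ | ⟨hTp, hFq⟩ <;>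
    rcases sb_pair hpr h2 with ⟨hFp', hTr⟩ | ⟨hTp', hFr⟩
  · rcases sb_pair hqr h3 with ⟨hFq, _⟩ | ⟨_, hFr⟩
    · exact evft hTq hFq
    · exact evft hTr hFr
  · exact evft hTp' hFp
  · exact evft hTp hFp'
  · rcases sb_pair hqr h3 with ⟨hFq', hTr⟩ | ⟨hTq, _⟩
    · exact evft hTr hFr
    · exact evft hTq hFq

lemma sb_dist {p q : ℕ → Bool} {N : ℕ} (h : ∀ i, i < N → p i = q i) :
    |sb p - sb q| ≤ (1/2 : ℝ) ^ N := by
  set d : ℕ → ℝ := fun i => sbf p i - sbf q i with hd_def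
  have hdsum : Summable d := (summable_sbf p).sub (summable_sbf q)
  have hhead : ∑ i ∈ Finset.range N, d i = 0 :=
    Finset.sum_eq_zero (fun i hi => by
      simp [hd_def, sbf, h i (Finset.mem_range.mp hi)])
  have key : sb p - sb q = ∑' i, d (i + N) := by
    have hsplit := Summable.sum_add_tsum_nat_add N hdsum
    rw [sb_eq_tsum, sb_eq_tsum, ← Summable.tsum_sub (summable_sbf p) (summable_sbf q)]
    rw [← hsplit, hhead, zero_add]
  have hhs : Summable fun i : ℕ => ((1:ℝ)/2) ^ (i + N + 1) := by
    have := (summable_nat_add_iff (f := fun i : ℕ => ((1:ℝ)/2) ^ (i + 1)) N).2 summable_half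
    simpa using this
  have habs : ∀ i : ℕ, |d (i + N)| ≤ (1/2:ℝ) ^ (i + N + 1) := by
    intro i
    have h1 := sbf_nonneg p (i+N)
    have h2 := sbf_nonneg q (i+N)
    have h3 := sbf_le p (i+N)
    have h4 := sbf_le q (i+N)
    rw [abs_le]
    constructor <;> simp only [hd_def] <;> linarith
  have hds : Summable fun i => d (i + N) := (summable_nat_add_iff N).2 hdsum
  have habsum : Summable fun i => |d (i + N)| := hds.abs
  rw [key, abs_le]
  have hub : ∀ i, d (i + N) ≤ (1/2:ℝ)^(i+N+1) := fun i => (abs_le.1 (habs i)).2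
  have hlb : ∀ i, -((1/2:ℝ)^(i+N+1)) ≤ d (i + N) := fun i => (abs_le.1 (habs i)).1
  constructor
  · have h5 := Summable.tsum_le_tsum hlb hhs.neg hds
    rw [tsum_neg, tsum_half] at h5
    exact h5
  · exact (Summable.tsum_le_tsum hub hds hhs).trans_eq (tsum_half N)

lemma sb_continuous : Continuous sb := by
  have hc : ∀ i : ℕ, Continuous fun p : ℕ → Bool => sbf p i := by
    intro i
    have h1 : Continuous fun b : Bool => (if b then (1:ℝ) else 0) / 2 ^ (i+1) :=
      continuous_of_discreteTopology
    exact h1.comp (continuous_apply i)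
  have heq : sb = fun p => ∑' i, sbf p i := rfl
  rw [heq]
  exact continuous_tsum hc summable_half (fun i p => by
    rw [Real.norm_eq_abs, abs_of_nonneg (sbf_nonneg p i)]
    exact sbf_le p i)

/-- The image under `s_b` of a perfect subset of Cantor space is a perfect subset of `ℝ`. -/
theorem sb_image_perfect {P : Set (ℕ → Bool)} (hP : Perfect P) :
    Perfect (sb '' P) := by
  constructor
  · exact ((hP.closed.isCompact).image sb_continuous).isClosed
  · intro x hx
    rw [accPt_iff_nhds]
    intro U hU
    obtain ⟨p, hpP, rfl⟩ := hx
    obtain ⟨ε, hε, hball⟩ := Metric.mem_nhds_iff.mp hU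
    obtain ⟨N, hN⟩ : ∃ N : ℕ, ((1:ℝ)/2)^N < ε :=
      exists_pow_lt_of_lt_one hε (by norm_num)
    set V : Set (ℕ → Bool) := {q | ∀ i, i < N → q i = p i} with hV_def
    have hVopen : IsOpen V := by
      have hVeq : V = ⋂ i ∈ Finset.range N, (fun q : ℕ → Bool => q i) ⁻¹' {p i} := by
        ext q
        simp [hV_def, Set.mem_iInter]
      rw [hVeq]
      exact isOpen_biInter_finset fun i _ =>
        (continuous_apply i).isOpen_preimage _ (isOpen_discrete _)
    have hpV : p ∈ V := fun i _ => rfl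
    have hVnhds : V ∈ 𝓝 p := hVopen.mem_nhds hpV
    have hacc := hP.acc p hpP
    rw [accPt_iff_nhds] at hacc
    obtain ⟨q1, ⟨hq1V, hq1P⟩, hq1p⟩ := hacc V hVnhds
    have hW : V ∩ {q1}ᶜ ∈ 𝓝 p :=
      Filter.inter_mem hVnhds
        ((isOpen_compl_singleton).mem_nhds (by simp [Ne.symm hq1p]))
    obtain ⟨q2, ⟨⟨hq2V, hq2ne⟩, hq2P⟩, hq2p⟩ := hacc _ hW
    have hd1 : |sb q1 - sb p| ≤ (1/2:ℝ)^N := sb_dist hq1V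
    have hd2 : |sb q2 - sb p| ≤ (1/2:ℝ)^N := sb_dist hq2V
    by_cases h1 : sb q1 = sb p
    · by_cases h2 : sb q2 = sb p
      · exact absurd h2 (fun h2 => sb_three (Ne.symm hq1p) (Ne.symm hq2p)
          (fun he => hq2ne (by simp [he])) h1.symm h2.symm)
      · refine ⟨sb q2, ⟨hball ?_, ⟨q2, hq2P, rfl⟩⟩, h2⟩
        rw [Metric.mem_ball, Real.dist_eq]
        exact lt_of_le_of_lt hd2 hN
    · refine ⟨sb q1, ⟨hball ?_, ⟨q1, hq1P, rfl⟩⟩, h1⟩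
      rw [Metric.mem_ball, Real.dist_eq]
      exact lt_of_le_of_lt hd1 hN
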